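/- Let $A$ and $B$ be vector spaces over a field $F$ and let $V \subseteq \mathrm{Hom}_F(A,B)$ be a pointwise finite dimensional subspace. Then its closure $\overline{V}$ in the finite topology on $\mathrm{Hom}_F(A,B)$ is also pointwise finite dimensional; in fact $\overline{V}a = Va$ for every $a \in A$. -/

import Mathlib

variable {F A B : Type*} [Field F] [AddCommGroup A] [Module F A] [AddCommGroup B] [Module F B]

/-- The finite topology on `Hom_F(A,B)`: pointwise convergence with `B` discrete. -/
def finiteTopology (F A B : Type*) [Field F] [AddCommGroup A] [Module F A]
    [AddCommGroup B] [Module F B] : TopologicalSpace (A →ₗ[F] B) :=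
  TopologicalSpace.induced (fun f : A →ₗ[F] B => (f : A → B))
    (@Pi.topologicalSpace A (fun _ => B) (fun _ => ⊥))

/-- If `V ⊆ Hom_F(A,B)` is pointwise finite dimensional, then its closure `V̄` in the finite
topology satisfies `V̄a = Va` for every `a ∈ A`; in particular `V̄` is also pointwise finite
dimensional. -/
theorem closure_pointwiseFD (V : Submodule F (A →ₗ[F] B))
    (hV : ∀ a : A,
      FiniteDimensional F (V.map ((LinearMap.applyₗ : A →ₗ[F] (A →ₗ[F] B) →ₗ[F] B) a))) :
    (∀ a : A, (fun f : A →ₗ[F] B => f a) '' (@closure _ (finiteTopology F A B) (V : Set _))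
        = (fun f : A →ₗ[F] B => f a) '' (V : Set _)) ∧
    (∀ a : A, FiniteDimensional F (Submodule.span F
        ((fun f : A →ₗ[F] B => f a) '' (@closure _ (finiteTopology F A B) (V : Set _))))) := by
  letI : TopologicalSpace (A →ₗ[F] B) := finiteTopology F A B
  have key : ∀ a : A, (fun f : A →ₗ[F] B => f a) '' (closure (V : Set _))
      = (fun f : A →ₗ[F] B => f a) '' (V : Set _) := by
    intro a
    apply Set.Subset.antisymm
    · rintro _ ⟨f, hf, rfl⟩
      have hU : IsOpen ((fun g : A →ₗ[F] B => g a) ⁻¹' {f a}) := by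
        have heq : (fun g : A →ₗ[F] B => g a) ⁻¹' {f a}
            = (fun g : A →ₗ[F] B => (g : A → B)) ⁻¹' ((fun p : A → B => p a) ⁻¹' {f a}) := rfl
        rw [heq]
        refine ⟨(fun p : A → B => p a) ⁻¹' {f a}, ?_, rfl⟩
        exact @Continuous.isOpen_preimage _ _ (@Pi.topologicalSpace A (fun _ => B) (fun _ => ⊥))
          ⊥ _ (@continuous_apply A (fun _ => B) (fun _ => ⊥) a) _ trivial
      obtain ⟨g, hg1, hg2⟩ := (mem_closure_iff.mp hf) _ hU rfl
      exact ⟨g, hg2, hg1⟩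
    · exact Set.image_mono subset_closure
  refine ⟨key, fun a => ?_⟩
  rw [key a]
  have : (fun f : A →ₗ[F] B => f a) '' (V : Set _)
      = ((V.map ((LinearMap.applyₗ : A →ₗ[F] (A →ₗ[F] B) →ₗ[F] B) a)) : Set B) := by
    simp [Submodule.map_coe]
  rw [this, Submodule.span_eq]
  exact hV a
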